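/- For positive semidefinite real matrices A and B, d_*(A,B) = 0 if and only if A = B, where d_* is the Bures-Wasserstein distance. -/

import Mathlib

open Matrix

open Classical in
/-- The unique positive semidefinite square root of a PSD matrix (junk value `0` otherwise). -/
noncomputable def msqrt {p : ℕ} (M : Matrix (Fin p) (Fin p) ℝ) : Matrix (Fin p) (Fin p) ℝ :=
  if h : M.PosSemidef then (h.1.eigenvectorUnitary : Matrix (Fin p) (Fin p) ℝ) *
    diagonal ((↑) ∘ (√·) ∘ h.1.eigenvalues) * (star h.1.eigenvectorUnitary : Matrix (Fin p) (Fin p) ℝ)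
  else 0

namespace Matrix.PosSemidef

open Classical in
/-- The PSD square root (explicit spectral form). -/
noncomputable def sqrt {p : ℕ} {M : Matrix (Fin p) (Fin p) ℝ} (h : M.PosSemidef) :
    Matrix (Fin p) (Fin p) ℝ :=
  (h.1.eigenvectorUnitary : Matrix (Fin p) (Fin p) ℝ) *
    diagonal ((↑) ∘ (√·) ∘ h.1.eigenvalues) * (star h.1.eigenvectorUnitary : Matrix (Fin p) (Fin p) ℝ)

open scoped MatrixOrder in
lemma sqrt_eq_cfcSqrt {p : ℕ} {M : Matrix (Fin p) (Fin p) ℝ} (h : M.PosSemidef) :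
    h.sqrt = CFC.sqrt M := by
  rw [CFC.sqrt_eq_cfc, cfc_nnreal_eq_real _ M, h.1.cfc_eq]
  simp only [IsHermitian.cfc, sqrt]
  congr 3
  funext i
  simp [Real.coe_sqrt, Real.coe_toNNReal _ (h.eigenvalues_nonneg i),
    max_eq_left (h.eigenvalues_nonneg i)]

open scoped MatrixOrder in
lemma posSemidef_sqrt {p : ℕ} {M : Matrix (Fin p) (Fin p) ℝ} (h : M.PosSemidef) :
    h.sqrt.PosSemidef := by
  rw [sqrt_eq_cfcSqrt]
  exact (CFC.sqrt_nonneg M).posSemidef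

open scoped MatrixOrder in
lemma sqrt_mul_self {p : ℕ} {M : Matrix (Fin p) (Fin p) ℝ} (h : M.PosSemidef) :
    h.sqrt * h.sqrt = M := by
  rw [sqrt_eq_cfcSqrt]
  exact CFC.sqrt_mul_sqrt_self M h.nonneg

open scoped MatrixOrder in
lemma eq_sqrt_of_sq_eq {p : ℕ} {A B : Matrix (Fin p) (Fin p) ℝ} (hA : A.PosSemidef)
    (hB : B.PosSemidef) (hAB : A ^ 2 = B) : A = hB.sqrt := by
  rw [sqrt_eq_cfcSqrt, ← hAB, sq, CFC.sqrt_mul_self A hA.nonneg]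

end Matrix.PosSemidef

/-- Squared Bures-Wasserstein distance. -/
noncomputable def BWsq {p : ℕ} (A B : Matrix (Fin p) (Fin p) ℝ) : ℝ :=
  A.trace - 2 * (msqrt (msqrt A * B * msqrt A)).trace + B.trace

/-- trace of `Yᴴ * Y` as a sum of squares. -/
lemma aux_trace_sq {p : ℕ} (Y : Matrix (Fin p) (Fin p) ℝ) :
    (Yᴴ * Y).trace = ∑ j, ∑ i, (Y i j) ^ 2 := by
  simp [Matrix.trace, Matrix.mul_apply, Matrix.conjTranspose_apply, Matrix.diag, sq]

lemma aux_trace_sq_nonneg {p : ℕ} (Y : Matrix (Fin p) (Fin p) ℝ) :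
    0 ≤ (Yᴴ * Y).trace := by
  rw [aux_trace_sq]
  positivity

lemma aux_eq_zero_of_trace_sq {p : ℕ} (Y : Matrix (Fin p) (Fin p) ℝ)
    (h : (Yᴴ * Y).trace = 0) : Y = 0 := by
  rw [aux_trace_sq] at h
  ext i j
  have h1 : ∀ j ∈ Finset.univ, (0:ℝ) ≤ ∑ i, (Y i j)^2 := fun j _ => by positivity
  have h2 := (Finset.sum_eq_zero_iff_of_nonneg h1).mp h j (Finset.mem_univ j)
  have h3 : ∀ i ∈ Finset.univ, (0:ℝ) ≤ (Y i j)^2 := fun i _ => sq_nonneg _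
  have h4 := (Finset.sum_eq_zero_iff_of_nonneg h3).mp h2 i (Finset.mem_univ i)
  simpa using pow_eq_zero_iff (n := 2) (by norm_num) |>.mp h4

/-- Key decomposition: for symmetric `S`, `T` and `M = (T*S)ᴴ*(T*S)` positive semidefinite,
the quantity `tr(S*S) + tr(T*T) - 2 tr √M` is an exact sum of two traces of Gram matrices,
and vanishing of both Gram matrices forces `S*S = T*T`. -/
lemma aux_decomp {p : ℕ} (S T : Matrix (Fin p) (Fin p) ℝ) (hS : Sᴴ = S) (hT : Tᴴ = T)
    {M : Matrix (Fin p) (Fin p) ℝ} (hM : M.PosSemidef) (hXM : M = (T * S)ᴴ * (T * S)) :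
    ∃ G K : Matrix (Fin p) (Fin p) ℝ,
      (S * S).trace + (T * T).trace - 2 * hM.sqrt.trace = (Gᴴ * G).trace + (Kᴴ * K).trace ∧
      (G = 0 → K = 0 → S * S = T * T) := by
  set P := hM.sqrt with hPdef
  have hP : P.PosSemidef := hM.posSemidef_sqrt
  have hPP : P * P = M := hM.sqrt_mul_self
  have hH : P.IsHermitian := hP.isHermitian
  set U : Matrix (Fin p) (Fin p) ℝ := (hH.eigenvectorUnitary : Matrix (Fin p) (Fin p) ℝ)
    with hUdef
  set σ : Fin p → ℝ := hH.eigenvalues with hσdef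
  have hspec : P = U * Matrix.diagonal σ * star U := by
    have := hH.spectral_theorem
    simpa [RCLike.ofReal_real_eq_id] using this
  have hUU : star U * U = 1 := by simp [hUdef]
  have hUU' : U * star U = 1 := by simp [hUdef]
  set D : Matrix (Fin p) (Fin p) ℝ := Matrix.diagonal σ with hDdef
  have hPU : P * U = U * D := by
    rw [hspec, Matrix.mul_assoc, Matrix.mul_assoc, hUU, Matrix.mul_one]
  have hUP : star U * P = D * star U := by
    rw [hspec, ← Matrix.mul_assoc, ← Matrix.mul_assoc, hUU, Matrix.one_mul]
  set Z : Matrix (Fin p) (Fin p) ℝ := (T * S) * U with hZdef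
  have hZZ : Zᴴ * Z = Matrix.diagonal (fun i => σ i ^ 2) := by
    have : Zᴴ * Z = star U * ((T * S)ᴴ * (T * S)) * U := by
      rw [hZdef, Matrix.conjTranspose_mul]
      noncomm_ring
    rw [this, ← hXM, ← hPP]
    calc star U * (P * P) * U = (star U * P) * (P * U) := by noncomm_ring
      _ = (D * star U) * (U * D) := by rw [hUP, hPU]
      _ = D * (star U * U) * D := by noncomm_ring
      _ = D * D := by rw [hUU, Matrix.mul_one]
      _ = Matrix.diagonal (fun i => σ i ^ 2) := by
          rw [hDdef, Matrix.diagonal_mul_diagonal, Matrix.diagonal_eq_diagonal_iff]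
          intro i; ring
  -- pseudo-inverse diagonal
  set σp : Fin p → ℝ := fun i => if σ i = 0 then 0 else (σ i)⁻¹ with hσpdef
  set E : Matrix (Fin p) (Fin p) ℝ := Matrix.diagonal (fun i => if σ i = 0 then (0:ℝ) else 1)
    with hEdef
  set W : Matrix (Fin p) (Fin p) ℝ := Z * Matrix.diagonal σp with hWdef
  have hdiagH : ∀ v : Fin p → ℝ, (Matrix.diagonal v)ᴴ = Matrix.diagonal v := by
    intro v
    rw [Matrix.diagonal_conjTranspose]
    congr 1
  have hWW : Wᴴ * W = E := by
    rw [hWdef, Matrix.conjTranspose_mul, hdiagH]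
    calc Matrix.diagonal σp * Zᴴ * (Z * Matrix.diagonal σp)
        = Matrix.diagonal σp * (Zᴴ * Z) * Matrix.diagonal σp := by noncomm_ring
      _ = Matrix.diagonal σp * Matrix.diagonal (fun i => σ i ^ 2) * Matrix.diagonal σp := by
          rw [hZZ]
      _ = E := by
          rw [Matrix.diagonal_mul_diagonal, Matrix.diagonal_mul_diagonal, hEdef,
            Matrix.diagonal_eq_diagonal_iff]
          intro i
          by_cases h : σ i = 0
          · simp [hσpdef, h]
          · simp only [hσpdef, h, if_false]
            field_simp
  have hZE : Z * E = Z := by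
    have key : (Z * (E - 1))ᴴ * (Z * (E - 1)) = 0 := by
      have hE1 : E - 1 = Matrix.diagonal (fun i => (if σ i = 0 then (0:ℝ) else 1) - 1) := by
        rw [hEdef, ← Matrix.diagonal_one, Matrix.diagonal_sub]
      rw [hE1, Matrix.conjTranspose_mul, hdiagH]
      calc Matrix.diagonal (fun i => (if σ i = 0 then (0:ℝ) else 1) - 1) * Zᴴ *
            (Z * Matrix.diagonal (fun i => (if σ i = 0 then (0:ℝ) else 1) - 1))
          = Matrix.diagonal (fun i => (if σ i = 0 then (0:ℝ) else 1) - 1) * (Zᴴ * Z) *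
            Matrix.diagonal (fun i => (if σ i = 0 then (0:ℝ) else 1) - 1) := by noncomm_ring
        _ = Matrix.diagonal (fun i => (if σ i = 0 then (0:ℝ) else 1) - 1) *
            Matrix.diagonal (fun i => σ i ^ 2) *
            Matrix.diagonal (fun i => (if σ i = 0 then (0:ℝ) else 1) - 1) := by rw [hZZ]
        _ = 0 := by
            rw [Matrix.diagonal_mul_diagonal, Matrix.diagonal_mul_diagonal,
              show (0 : Matrix (Fin p) (Fin p) ℝ) = Matrix.diagonal (fun _ => (0:ℝ)) from
                Matrix.diagonal_zero.symm, Matrix.diagonal_eq_diagonal_iff]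
            intro i
            by_cases h : σ i = 0 <;> simp [h]
    have := Matrix.conjTranspose_mul_self_eq_zero.mp key
    have h2 : Z * E - Z * 1 = 0 := by rw [← Matrix.mul_sub]; exact this
    rw [Matrix.mul_one] at h2
    linear_combination (norm := noncomm_ring) h2
  have hWD : W * D = Z := by
    have hpe : Matrix.diagonal σp * D = E := by
      rw [hDdef, hEdef, Matrix.diagonal_mul_diagonal, Matrix.diagonal_eq_diagonal_iff]
      intro i
      by_cases h : σ i = 0
      · simp [hσpdef, h]
      · simp only [hσpdef, h, if_false]
        field_simp
    rw [hWdef, Matrix.mul_assoc, hpe, hZE]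
  have hWE : W * E = W := by
    have hpe : Matrix.diagonal σp * E = Matrix.diagonal σp := by
      rw [hEdef, Matrix.diagonal_mul_diagonal, Matrix.diagonal_eq_diagonal_iff]
      intro i
      by_cases h : σ i = 0 <;> simp [hσpdef, h]
    rw [hWdef, Matrix.mul_assoc, hpe]
  set Q : Matrix (Fin p) (Fin p) ℝ := W * Wᴴ with hQdef
  have hQH : Qᴴ = Q := by
    rw [hQdef, Matrix.conjTranspose_mul, Matrix.conjTranspose_conjTranspose]
  have hQQ : Q * Q = Q := by
    calc Q * Q = W * (Wᴴ * W) * Wᴴ := by rw [hQdef]; noncomm_ring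
      _ = W * E * Wᴴ := by rw [hWW]
      _ = Q := by rw [hWE, hQdef]
  clear_value P U σ D Z σp E W Q
  -- trace identities
  have hED : E * D = D := by
    rw [hEdef, hDdef, Matrix.diagonal_mul_diagonal, Matrix.diagonal_eq_diagonal_iff]
    intro i
    by_cases h : σ i = 0 <;> simp [h]
  have t3 : ((T * W)ᴴ * (S * U)).trace = P.trace := by
    have lhs_eq : (T * W)ᴴ * (S * U) = D := by
      calc (T * W)ᴴ * (S * U) = Wᴴ * Tᴴ * (S * U) := by rw [Matrix.conjTranspose_mul]
        _ = Wᴴ * ((T * S) * U) := by rw [hT]; noncomm_ring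
        _ = Wᴴ * Z := by rw [hZdef]
        _ = Wᴴ * (W * D) := by rw [hWD]
        _ = (Wᴴ * W) * D := by rw [← Matrix.mul_assoc]
        _ = E * D := by rw [hWW]
        _ = D := hED
    have rhs_eq : P.trace = D.trace := by
      rw [hspec, Matrix.trace_mul_cycle, hUU, Matrix.one_mul]
    rw [lhs_eq, rhs_eq]
  have t4 : ((S * U)ᴴ * (T * W)).trace = P.trace := by
    have : (S * U)ᴴ * (T * W) = ((T * W)ᴴ * (S * U))ᴴ := by
      simp [Matrix.conjTranspose_mul, Matrix.mul_assoc]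
    rw [this, Matrix.trace_conjTranspose, t3, star_trivial]
  have t1 : ((S * U)ᴴ * (S * U)).trace = (S * S).trace := by
    have : (S * U)ᴴ * (S * U) = star U * (S * S) * U := by
      rw [Matrix.conjTranspose_mul, hS]; noncomm_ring
    rw [this, Matrix.trace_mul_cycle, ← Matrix.mul_assoc, hUU', Matrix.one_mul]
  have t2 : ((T * W)ᴴ * (T * W)).trace = (Q * (T * T)).trace := by
    have : (T * W)ᴴ * (T * W) = Wᴴ * (T * T) * W := by
      rw [Matrix.conjTranspose_mul, hT]; noncomm_ring
    rw [this, Matrix.trace_mul_cycle, hQdef]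
  -- define G, K
  refine ⟨S * U - T * W, T - Q * T, ?_, ?_⟩
  · have hG : ((S * U - T * W)ᴴ * (S * U - T * W)).trace =
        (S * S).trace + (Q * (T * T)).trace - 2 * P.trace := by
      simp only [Matrix.conjTranspose_sub, Matrix.sub_mul, Matrix.mul_sub, Matrix.trace_sub]
      rw [t1, t2, t3, t4]
      ring
    have hK : ((T - Q * T)ᴴ * (T - Q * T)).trace = (T * T).trace - (Q * (T * T)).trace := by
      have expand : (T - Q * T)ᴴ * (T - Q * T) = T * T - T * (Q * T) := by
        rw [Matrix.conjTranspose_sub, hT, Matrix.conjTranspose_mul, hT, hQH]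
        have h1 : (T - T * Q) * (T - Q * T) =
            T * T - T * (Q * T) - (T * (Q * T) - T * (Q * (Q * T))) := by
          simp only [Matrix.sub_mul, Matrix.mul_sub, Matrix.mul_assoc]
        rw [h1, ← Matrix.mul_assoc Q Q T, hQQ]
        abel
      rw [expand, Matrix.trace_sub]
      have : (T * (Q * T)).trace = (Q * (T * T)).trace := by
        rw [Matrix.trace_mul_comm]
        congr 1
        noncomm_ring
      rw [this]
    rw [hG, hK]
    ring
  · intro hG0 hK0
    have hSU : S * U = T * W := by
      have := sub_eq_zero.mp hG0
      exact this
    have hQT : Q * T = T := by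
      have := sub_eq_zero.mp hK0
      exact this.symm
    have hTQ : T * Q = T := by
      calc T * Q = Tᴴ * Qᴴ := by rw [hT, hQH]
        _ = (Q * T)ᴴ := (Matrix.conjTranspose_mul Q T).symm
        _ = Tᴴ := by rw [hQT]
        _ = T := hT
    calc S * S = S * (U * star U) * S := by rw [hUU', Matrix.mul_one]
      _ = (S * U) * (star U * Sᴴ) := by rw [hS]; noncomm_ring
      _ = (S * U) * (S * U)ᴴ := by
          rw [Matrix.conjTranspose_mul, Matrix.star_eq_conjTranspose]
      _ = (T * W) * (T * W)ᴴ := by rw [hSU]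
      _ = T * (W * Wᴴ) * Tᴴ := by rw [Matrix.conjTranspose_mul]; noncomm_ring
      _ = T * Q * T := by rw [hQdef, hT]
      _ = T * T := by rw [hTQ]

/-- For positive semidefinite `A`, `B`: the Bures-Wasserstein distance is zero iff `A = B`. -/
theorem stmt14 {P : ℕ} (A B : Matrix (Fin P) (Fin P) ℝ)
    (hA : A.PosSemidef) (hB : B.PosSemidef) :
    Real.sqrt (BWsq A B) = 0 ↔ A = B := by
  have hmsA : msqrt A = hA.sqrt := dif_pos hA
  set S := hA.sqrt with hSdef
  set T := hB.sqrt with hTdef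
  have hSps : S.PosSemidef := hA.posSemidef_sqrt
  have hTps : T.PosSemidef := hB.posSemidef_sqrt
  have hSH : Sᴴ = S := hSps.isHermitian
  have hTH : Tᴴ = T := hTps.isHermitian
  have hSS : S * S = A := hA.sqrt_mul_self
  have hTT : T * T = B := hB.sqrt_mul_self
  have hMeq : msqrt A * B * msqrt A = (T * S)ᴴ * (T * S) := by
    rw [hmsA, Matrix.conjTranspose_mul, hSH, hTH, ← hTT]
    noncomm_ring
  have hM : (msqrt A * B * msqrt A).PosSemidef := by
    rw [hMeq]; exact Matrix.posSemidef_conjTranspose_mul_self _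
  have hmsM : msqrt (msqrt A * B * msqrt A) = hM.sqrt := dif_pos hM
  obtain ⟨G, K, hGK, heq⟩ := aux_decomp S T hSH hTH hM hMeq
  have hBW : BWsq A B = (Gᴴ * G).trace + (Kᴴ * K).trace := by
    unfold BWsq
    rw [hmsM, ← hGK, hSS, hTT]
    ring
  constructor
  · intro h
    have hle : BWsq A B ≤ 0 := by
      by_contra hpos
      push_neg at hpos
      have := Real.sqrt_pos.mpr hpos
      linarith [this.trans_eq h]
    have hGnn := aux_trace_sq_nonneg G
    have hKnn := aux_trace_sq_nonneg K
    have hG0 : (Gᴴ * G).trace = 0 := by linarith [hBW ▸ hle]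
    have hK0 : (Kᴴ * K).trace = 0 := by linarith [hBW ▸ hle]
    have := heq (aux_eq_zero_of_trace_sq G hG0) (aux_eq_zero_of_trace_sq K hK0)
    rw [← hSS, ← hTT, this]
  · intro h
    have hBW0 : BWsq A B = 0 := by
      rw [hBW]
      have hGnn := aux_trace_sq_nonneg G
      have hKnn := aux_trace_sq_nonneg K
      -- From A = B, BWsq A B = 0 directly; instead compute via definition
      subst h
      have hTSeq : T = S := rfl
      have hMA : msqrt A * A * msqrt A = A * A := by
        rw [hmsA, ← hSS]
        noncomm_ring
      have hAA : (A * A).PosSemidef := by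
        have := hA.pow 2
        rwa [pow_two] at this
      have hsqrtAA : hAA.sqrt = A := by
        have := hA.eq_sqrt_of_sq_eq hAA (by rw [pow_two])
        exact this.symm
      have : BWsq A A = 0 := by
        unfold BWsq
        rw [hMA, show msqrt (A * A) = hAA.sqrt from dif_pos hAA, hsqrtAA]
        ring
      rw [← hBW, this]
    rw [hBW0, Real.sqrt_zero]
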